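/- Let f, g ∈ ℂ[z] with deg f ≤ n and deg g ≤ n, let B = H_f·T_g − H_g·T_f be the n×n Bezoutian matrix and R = [[T_f, Z·H_f],[T_g, Z·H_g]] the 2n×2n resultant matrix. Then Rᵀ · [[0, Z],[−Z, 0]] · R = [[0, −B],[B, 0]], where both 2×2 block matrices have n×n blocks. -/

import Mathlib

open Polynomial Matrix
open Finset

/-- The `n × n` Hankel matrix of a polynomial `f`: `(H_f)_{jk} = f_{j+k+1}`. -/
noncomputable def Hk (n : ℕ) (f : ℂ[X]) : Matrix (Fin n) (Fin n) ℂ :=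
  Matrix.of fun j k => f.coeff ((j : ℕ) + (k : ℕ) + 1)

/-- The `n × n` upper triangular Toeplitz matrix of a polynomial `f`:
`(T_f)_{jk} = f_{k-j}` if `k ≥ j`, and `0` otherwise. -/
noncomputable def Tp (n : ℕ) (f : ℂ[X]) : Matrix (Fin n) (Fin n) ℂ :=
  Matrix.of fun j k => if (j : ℕ) ≤ (k : ℕ) then f.coeff ((k : ℕ) - (j : ℕ)) else 0

/-- The `n × n` reverse identity matrix `Z`. -/
noncomputable def Rv (n : ℕ) : Matrix (Fin n) (Fin n) ℂ :=
  Matrix.of fun j k => if (j : ℕ) + (k : ℕ) = n - 1 then 1 else 0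

/-- The `n × n` Bezoutian matrix of `f` and `g`: `B = H_f T_g - H_g T_f`. -/
noncomputable def Bz (n : ℕ) (f g : ℂ[X]) : Matrix (Fin n) (Fin n) ℂ :=
  Hk n f * Tp n g - Hk n g * Tp n f

/-- The `2n × 2n` resultant matrix of `f` and `g`:
`R = [[T_f, Z H_f], [T_g, Z H_g]]`. -/
noncomputable def Rs (n : ℕ) (f g : ℂ[X]) : Matrix (Fin n ⊕ Fin n) (Fin n ⊕ Fin n) ℂ :=
  Matrix.fromBlocks (Tp n f) (Rv n * Hk n f) (Tp n g) (Rv n * Hk n g)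

/-- The fundamental relation between resultant and Bezoutian:
`Rᵀ [[0, Z], [-Z, 0]] R = [[0, -B], [B, 0]]`. -/
lemma coeffmul (f g : ℂ[X]) (m : ℕ) :
    (f * g).coeff m = ∑ i ∈ range (m+1), f.coeff i * g.coeff (m - i) := by
  rw [Polynomial.coeff_mul, Finset.Nat.sum_antidiagonal_eq_sum_range_succ_mk]

lemma rv_mul_apply {n : ℕ} (M : Matrix (Fin n) (Fin n) ℂ) (j k : Fin n) :
    (Rv n * M) j k = M j.rev k := by
  rw [Matrix.mul_apply, Finset.sum_eq_single j.rev]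
  · rw [Rv]
    simp only [Matrix.of_apply, Fin.val_rev]
    rw [if_pos (by have := j.isLt; omega), one_mul]
  · intro b _ hb
    rw [Rv]; simp only [Matrix.of_apply]
    rw [if_neg, zero_mul]
    intro hcon
    apply hb
    apply Fin.ext
    rw [Fin.val_rev]
    have := j.isLt; have := b.isLt
    omega
  · intro h; exact absurd (Finset.mem_univ _) h



lemma tl_lemma (n : ℕ) (f g : ℂ[X]) :
    (Tp n f)ᵀ * (Rv n * Tp n g) =
      Matrix.of fun j k : Fin n =>
        if n ≤ (j:ℕ)+(k:ℕ)+1 then (f*g).coeff ((j:ℕ)+(k:ℕ)+1-n) else 0 := by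
  ext j k
  have hj := j.isLt; have hk := k.isLt
  rw [Matrix.mul_apply]
  simp only [rv_mul_apply, Matrix.transpose_apply, Tp, Matrix.of_apply, Fin.val_rev]
  rw [Fin.sum_univ_eq_sum_range (fun a =>
    (if a ≤ (j:ℕ) then f.coeff ((j:ℕ) - a) else 0) *
    (if n - (a + 1) ≤ (k:ℕ) then g.coeff ((k:ℕ) - (n - (a + 1))) else 0))]
  by_cases h : n ≤ (j:ℕ)+(k:ℕ)+1
  · rw [if_pos h, coeffmul]
    rw [← Finset.sum_subset (show Finset.Ico (n-1-(k:ℕ)) ((j:ℕ)+1) ⊆ range n by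
        intro a ha; rw [Finset.mem_Ico] at ha; rw [Finset.mem_range]; omega)]
    · rw [Finset.sum_Ico_eq_sum_range,
        show (j:ℕ)+1 - (n-1-(k:ℕ)) = ((j:ℕ)+(k:ℕ)+1-n)+1 by omega,
        ← Finset.sum_range_reflect
          (fun i => f.coeff i * g.coeff ((j:ℕ)+(k:ℕ)+1-n - i)) (((j:ℕ)+(k:ℕ)+1-n)+1)]
      apply Finset.sum_congr rfl
      intro x hx
      rw [Finset.mem_range] at hx
      rw [if_pos (by omega), if_pos (by omega)]
      rw [show (j:ℕ) - (n-1-(k:ℕ) + x) = (j:ℕ)+(k:ℕ)+1-n + 1 - 1 - x by omega,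
          show (k:ℕ) - (n - (n-1-(k:ℕ) + x + 1)) =
            (j:ℕ)+(k:ℕ)+1-n - ((j:ℕ)+(k:ℕ)+1-n + 1 - 1 - x) by omega]
    · intro x hx hx'
      rw [Finset.mem_range] at hx
      rw [Finset.mem_Ico] at hx'
      by_cases h1 : x ≤ (j:ℕ)
      · rw [if_neg (show ¬(n - (x+1) ≤ (k:ℕ)) by omega), mul_zero]
      · rw [if_neg h1, zero_mul]
  · rw [if_neg h]
    apply Finset.sum_eq_zero
    intro x hx
    rw [Finset.mem_range] at hx
    by_cases h1 : x ≤ (j:ℕ)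
    · rw [if_neg (show ¬(n - (x+1) ≤ (k:ℕ)) by omega), mul_zero]
    · rw [if_neg h1, zero_mul]

lemma tr_lemma (n : ℕ) (f g : ℂ[X]) :
    (Tp n f)ᵀ * Hk n g + Hk n f * Tp n g =
      Matrix.of fun j k : Fin n => (f*g).coeff ((j:ℕ)+(k:ℕ)+1) := by
  ext j k
  have hj := j.isLt; have hk := k.isLt
  rw [Matrix.add_apply, Matrix.mul_apply, Matrix.mul_apply]
  simp only [Matrix.transpose_apply, Tp, Hk, Matrix.of_apply]
  rw [Fin.sum_univ_eq_sum_range (fun a =>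
    (if a ≤ (j:ℕ) then f.coeff ((j:ℕ) - a) else 0) * g.coeff (a + (k:ℕ) + 1))]
  rw [Fin.sum_univ_eq_sum_range (fun a =>
    f.coeff ((j:ℕ) + a + 1) * (if a ≤ (k:ℕ) then g.coeff ((k:ℕ) - a) else 0))]
  rw [coeffmul, Finset.range_eq_Ico (a := (j:ℕ)+(k:ℕ)+1+1),
    ← Finset.sum_Ico_consecutive _ (show 0 ≤ (j:ℕ)+1 by omega)
      (show (j:ℕ)+1 ≤ (j:ℕ)+(k:ℕ)+1+1 by omega),
    ← Finset.range_eq_Ico,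
    ← Finset.sum_range_reflect
      (fun i => f.coeff i * g.coeff ((j:ℕ)+(k:ℕ)+1 - i)) ((j:ℕ)+1),
    Finset.sum_Ico_eq_sum_range,
    show (j:ℕ)+(k:ℕ)+1+1 - ((j:ℕ)+1) = (k:ℕ)+1 by omega]
  congr 1
  · rw [← Finset.sum_subset (show range ((j:ℕ)+1) ⊆ range n by
        intro a ha; rw [Finset.mem_range] at *; omega)]
    · apply Finset.sum_congr rfl
      intro x hx
      rw [Finset.mem_range] at hx
      rw [if_pos (by omega)]
      rw [show (j:ℕ) - x = (j:ℕ)+1-1-x by omega,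
          show x + (k:ℕ) + 1 = (j:ℕ)+(k:ℕ)+1 - ((j:ℕ)+1-1-x) by omega]
    · intro x hx hx'
      rw [Finset.mem_range] at hx hx'
      rw [if_neg (by omega), zero_mul]
  · rw [← Finset.sum_subset (show range ((k:ℕ)+1) ⊆ range n by
        intro a ha; rw [Finset.mem_range] at *; omega)]
    · apply Finset.sum_congr rfl
      intro x hx
      rw [Finset.mem_range] at hx
      rw [if_pos (by omega)]
      rw [show (j:ℕ) + x + 1 = (j:ℕ)+1+x by omega,
          show (k:ℕ) - x = (j:ℕ)+(k:ℕ)+1 - ((j:ℕ)+1+x) by omega]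
    · intro x hx hx'
      rw [Finset.mem_range] at hx hx'
      rw [if_neg (by omega), mul_zero]

lemma br_lemma (n : ℕ) (f g : ℂ[X]) (hf : f.natDegree ≤ n) (hg : g.natDegree ≤ n) :
    Hk n f * (Rv n * Hk n g) =
      Matrix.of fun j k : Fin n => (f*g).coeff (n+(j:ℕ)+(k:ℕ)+1) := by
  ext j k
  have hj := j.isLt; have hk := k.isLt
  rw [Matrix.mul_apply]
  simp only [rv_mul_apply, Hk, Matrix.of_apply, Fin.val_rev]
  rw [Fin.sum_univ_eq_sum_range (fun a =>
    f.coeff ((j:ℕ) + a + 1) * g.coeff (n - (a + 1) + (k:ℕ) + 1))]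
  rw [coeffmul]
  rw [← Finset.sum_subset (show Finset.Ico ((j:ℕ)+1) ((j:ℕ)+1+n) ⊆ range (n+(j:ℕ)+(k:ℕ)+1+1) by
      intro a ha; rw [Finset.mem_Ico] at ha; rw [Finset.mem_range]; omega)]
  · rw [Finset.sum_Ico_eq_sum_range,
      show (j:ℕ)+1+n - ((j:ℕ)+1) = n by omega]
    apply Finset.sum_congr rfl
    intro x hx
    rw [Finset.mem_range] at hx
    rw [show (j:ℕ) + x + 1 = (j:ℕ)+1+x by omega,
        show n - (x + 1) + (k:ℕ) + 1 = n+(j:ℕ)+(k:ℕ)+1 - ((j:ℕ)+1+x) by omega]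
  · intro x hx hx'
    rw [Finset.mem_range] at hx
    rw [Finset.mem_Ico] at hx'
    by_cases h1 : x ≤ (j:ℕ)
    · rw [Polynomial.coeff_eq_zero_of_natDegree_lt (lt_of_le_of_lt hg (by omega)), mul_zero]
    · rw [Polynomial.coeff_eq_zero_of_natDegree_lt (lt_of_le_of_lt hf (by omega)), zero_mul]

lemma hk_symm (n : ℕ) (f : ℂ[X]) : (Hk n f)ᵀ = Hk n f := by
  ext j k
  simp only [Matrix.transpose_apply, Hk, Matrix.of_apply]
  congr 1
  omega

lemma rv_symm (n : ℕ) : (Rv n)ᵀ = Rv n := by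
  ext j k
  simp only [Matrix.transpose_apply, Rv, Matrix.of_apply]
  rw [Nat.add_comm (k:ℕ) (j:ℕ)]

lemma rv_rv (n : ℕ) : Rv n * Rv n = 1 := by
  ext j k
  rw [rv_mul_apply, Rv, Matrix.one_apply]
  simp only [Matrix.of_apply, Fin.val_rev]
  have hj := j.isLt; have hk := k.isLt
  by_cases h : j = k
  · subst h
    rw [if_pos (by omega), if_pos rfl]
  · rw [if_neg, if_neg h]
    intro hcon
    exact h (Fin.ext (by omega))

lemma rv_rv_M {n : ℕ} (M : Matrix (Fin n) (Fin n) ℂ) : Rv n * (Rv n * M) = M := by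
  rw [← Matrix.mul_assoc, rv_rv, Matrix.one_mul]


/-- The fundamental relation between resultant and Bezoutian:
`Rᵀ [[0, Z], [-Z, 0]] R = [[0, -B], [B, 0]]`. -/
theorem resultant_bezoutian_relation (f g : ℂ[X]) (n : ℕ)
    (hf : f.natDegree ≤ n) (hg : g.natDegree ≤ n) :
    (Rs n f g)ᵀ * Matrix.fromBlocks 0 (Rv n) (-(Rv n)) 0 * Rs n f g =
      Matrix.fromBlocks 0 (-(Bz n f g)) (Bz n f g) 0 := by
  rw [Rs, Matrix.fromBlocks_transpose, Matrix.fromBlocks_multiply, Matrix.fromBlocks_multiply]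
  simp only [Matrix.transpose_mul, hk_symm, rv_symm, Matrix.mul_zero, Matrix.zero_mul,
    Matrix.mul_neg, Matrix.neg_mul, add_zero, zero_add, Matrix.mul_assoc, rv_rv_M,
    Matrix.mul_one]
  have key : (Tp n f)ᵀ * Hk n g + Hk n f * Tp n g = (Tp n g)ᵀ * Hk n f + Hk n g * Tp n f := by
    rw [tr_lemma, tr_lemma, show g * f = f * g from mul_comm g f]
  have e1 : -((Tp n g)ᵀ * (Rv n * Tp n f)) + (Tp n f)ᵀ * (Rv n * Tp n g)
      = (0 : Matrix (Fin n) (Fin n) ℂ) := by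
    rw [tl_lemma, tl_lemma,
      show g * f = f * g from mul_comm g f, neg_add_cancel]
  have e2 : -((Tp n g)ᵀ * Hk n f) + (Tp n f)ᵀ * Hk n g = -(Bz n f g) := by
    rw [Bz, neg_sub, neg_add_eq_sub, sub_eq_sub_iff_add_eq_add, key]
    exact add_comm _ _
  have e3 : -(Hk n g * Tp n f) + Hk n f * Tp n g = Bz n f g := by
    rw [Bz, neg_add_eq_sub]
  have e4 : -(Hk n g * (Rv n * Hk n f)) + Hk n f * (Rv n * Hk n g)
      = (0 : Matrix (Fin n) (Fin n) ℂ) := by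
    rw [br_lemma n f g hf hg, br_lemma n g f hg hf,
      show g * f = f * g from mul_comm g f, neg_add_cancel]
  rw [e1, e2, e3, e4]
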